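/- The p-adic density of projective integer-matrix binary cubic forms is 1 - 1/p². More precisely, for a prime p, the number of quadruples (a,b,c,d) in (ℤ/pℤ)⁴ satisfying b² - ac ≡ 0, bc - ad ≡ 0, and c² - bd ≡ 0 (mod p) is exactly p². -/

import Mathlib

/-- The number of quadruples $(a,b,c,d) \in (\mathbb{Z}/p\mathbb{Z})^4$ satisfying
$b^2 = ac$, $bc = ad$, $c^2 = bd$ is exactly $p^2$; hence the $p$-adic density of
projective integer-matrix binary cubic forms is $1 - 1/p^2$. -/
theorem count_nonprojective_mod_p (p : ℕ) [Fact p.Prime] :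
    (Finset.univ.filter (fun t : ZMod p × ZMod p × ZMod p × ZMod p =>
      t.2.1 ^ 2 = t.1 * t.2.2.1 ∧ t.2.1 * t.2.2.1 = t.1 * t.2.2.2 ∧
        t.2.2.1 ^ 2 = t.2.1 * t.2.2.2)).card = p ^ 2 := by
  classical
  set g : ZMod p × ZMod p → ZMod p × ZMod p × ZMod p × ZMod p :=
    fun s => if s.1 = 0 then (0, 0, 0, s.2)
      else (s.1, s.2, s.2 ^ 2 * s.1⁻¹, s.2 ^ 3 * s.1⁻¹ ^ 2) with hg
  have hinj : Function.Injective g := by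
    rintro ⟨a, b⟩ ⟨a', b'⟩ h
    simp only [hg] at h
    split_ifs at h with ha ha' ha' <;> simp_all [Prod.ext_iff]
  have hset : (Finset.univ.filter (fun t : ZMod p × ZMod p × ZMod p × ZMod p =>
      t.2.1 ^ 2 = t.1 * t.2.2.1 ∧ t.2.1 * t.2.2.1 = t.1 * t.2.2.2 ∧
        t.2.2.1 ^ 2 = t.2.1 * t.2.2.2)) = Finset.image g Finset.univ := by
    ext t
    simp only [Finset.mem_filter, Finset.mem_image, Finset.mem_univ, true_and]
    constructor
    · obtain ⟨a, b, c, d⟩ := t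
      rintro ⟨h1, h2, h3⟩
      by_cases ha : a = 0
      · subst ha
        have hb : b = 0 := by
          have : b ^ 2 = 0 := by simpa using h1
          exact pow_eq_zero_iff (by norm_num) |>.mp this
        have hc : c = 0 := by
          have : c ^ 2 = 0 := by simpa [hb] using h3
          exact pow_eq_zero_iff (by norm_num) |>.mp this
        exact ⟨(0, d), by simp [hg, hb, hc]⟩
      · refine ⟨(a, b), ?_⟩
        have hc : c = b ^ 2 * a⁻¹ := by
          field_simp
          linear_combination -h1
        have hd : d = b ^ 3 * a⁻¹ ^ 2 := by
          have h2' : b * c = a * d := h2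
          rw [hc] at h2'
          field_simp at h2' ⊢
          linear_combination -h2'
        simp [hg, ha, hc, hd]
    · rintro ⟨⟨a', b'⟩, rfl⟩
      by_cases ha' : a' = 0 <;> simp [hg, ha']
      refine ⟨by field_simp, by field_simp, by field_simp⟩
  rw [hset, Finset.card_image_of_injective _ hinj, Finset.card_univ,
    Fintype.card_prod, ZMod.card, sq]
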